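/- Let L be a number field, P ∈ L[Y_1,…,Y_n] of total degree ≤ d, and let I_1 ⊔ … ⊔ I_r be a partition of {1,…,m} for some m ≤ n. Suppose d_k bounds the total degree of P in the variables (Y_i)_{i ∈ I_k}. Then for y_1,…,y_m ∈ L, the partial evaluation Q = P(y_1,…,y_m,Y_{m+1},…,Y_n) satisfies h(Q) ≤ h(P) + Σ_{k=1}^r (#I_k)·log(d_k+1) + Σ_{k=1}^r d_k·h((y_i)_{i ∈ I_k}). -/

import Mathlib

/- Abstract setup for absolute logarithmic Weil heights on a number field `L`:
places `v` with normalized absolute values `absv v` and local weights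
`wt v = d_v / [L:ℚ]`, the archimedean places forming a finite set `arch` of
total weight `1`, the other places being nonarchimedean.
A partition `I_1 ⊔ … ⊔ I_r` of `{1,…,m}` is encoded by a map
`π : Fin m → Fin r`, with `I_k = π⁻¹(k)`. -/

open Finset MvPolynomial

section supHelpers
variable {α : Type*}

lemma supMem_le {S : Finset α} {g : α → ℝ} {R : ℝ} (hR : 0 ≤ R) (h : ∀ a ∈ S, g a ≤ R) :
    (⨆ a ∈ S, g a) ≤ R :=
  Real.iSup_le (fun a => Real.iSup_le (fun ha => h a ha) hR) hR

lemma supMem_apply [DecidableEq α] (S : Finset α) (g : α → ℝ) (a : α) :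
    (⨆ _ : a ∈ S, g a) = if a ∈ S then g a else 0 := by
  by_cases h : a ∈ S
  · rw [if_pos h]; exact ciSup_pos h
  · rw [if_neg h]
    have : IsEmpty (a ∈ S) := ⟨h⟩
    exact Real.iSup_of_isEmpty _

lemma le_supMem {S : Finset α} {g : α → ℝ} {a : α} (ha : a ∈ S) :
    g a ≤ ⨆ a ∈ S, g a := by
  classical
  have hb : BddAbove (Set.range fun a => ⨆ _ : a ∈ S, g a) := by
    apply BddAbove.mono (t := ↑(insert (0:ℝ) (S.image g)))
    · rintro x ⟨b, rfl⟩
      show (⨆ _ : b ∈ S, g b) ∈ _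
      rw [supMem_apply]
      split_ifs with h
      · exact_mod_cast Finset.mem_coe.mpr (mem_insert_of_mem (mem_image_of_mem g h))
      · exact_mod_cast Finset.mem_coe.mpr (mem_insert_self _ _)
    · exact Finset.bddAbove _
  calc g a = ⨆ _ : a ∈ S, g a := (ciSup_pos (f := fun _ => g a) ha).symm
  _ ≤ _ := le_ciSup hb a

end supHelpers

lemma nonarch_sum {L : Type*} [Field L] {A : AbsoluteValue L ℝ}
    (hA : IsNonarchimedean ⇑A) {α : Type*} (S : Finset α) (f : α → L) {B : ℝ}
    (hB : 0 ≤ B) (h : ∀ a ∈ S, A (f a) ≤ B) : A (∑ a ∈ S, f a) ≤ B := by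
  classical
  induction S using Finset.induction with
  | empty => simpa using hB
  | @insert x s hx ih =>
    rw [Finset.sum_insert hx]
    exact le_trans (hA _ _) (max_le (h _ (Finset.mem_insert_self _ _))
      (ih fun a ha => h a (Finset.mem_insert_of_mem ha)))

/-- The affine height of a tuple of elements. -/
noncomputable def heightTuple {L V : Type*} [Field L]
    (absv : V → AbsoluteValue L ℝ) (wt : V → ℝ) {ι : Type*} (y : ι → L) : ℝ :=
  ∑ᶠ v, wt v * Real.log (max 1 (⨆ i, absv v (y i)))

/-- The height of a multivariate polynomial: the height of the affine tuple of
its coefficients. -/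
noncomputable def heightMv {L V : Type*} [Field L] {σ : Type*}
    (absv : V → AbsoluteValue L ℝ) (wt : V → ℝ) (P : MvPolynomial σ L) : ℝ :=
  ∑ᶠ v, wt v * Real.log (max 1 (⨆ s ∈ P.support, absv v (MvPolynomial.coeff s P)))

/-- Partial evaluation `P(y_1,…,y_m,Y_{m+1},…,Y_n)` of a multivariate
polynomial at values for its first `m` variables. -/
noncomputable def partialEval {L : Type*} [CommSemiring L] {n m : ℕ}
    (y : Fin m → L) (P : MvPolynomial (Fin n) L) : MvPolynomial (Fin n) L :=
  MvPolynomial.aeval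
    (fun i : Fin n => if h : (i : ℕ) < m then MvPolynomial.C (y ⟨i, h⟩)
      else MvPolynomial.X i) P

lemma partialEval_eq_sum {L : Type*} [CommSemiring L] {n m : ℕ} (hmn : m ≤ n)
    (y : Fin m → L) (P : MvPolynomial (Fin n) L) :
    partialEval y P = ∑ s ∈ P.support,
      MvPolynomial.monomial (Finsupp.filter (fun i : Fin n => ¬ (i : ℕ) < m) s)
        (MvPolynomial.coeff s P * ∏ i : Fin m, y i ^ s (Fin.castLE hmn i)) := by
  classical
  conv_lhs => rw [partialEval, P.as_sum, map_sum]
  refine Finset.sum_congr rfl fun s _ => ?_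
  rw [aeval_monomial]
  set f : Fin n → MvPolynomial (Fin n) L :=
    fun i : Fin n => if h : (i : ℕ) < m then MvPolynomial.C (y ⟨i, h⟩)
      else MvPolynomial.X i with hf
  have hprod : (s.prod fun i k => f i ^ k) = ∏ i : Fin n, f i ^ s i :=
    Finsupp.prod_fintype _ _ (fun i => pow_zero _)
  rw [hprod, ← Finset.prod_filter_mul_prod_filter_not Finset.univ (fun i : Fin n => (i : ℕ) < m)]
  have h1 : ∏ i ∈ Finset.univ.filter (fun i : Fin n => (i : ℕ) < m), f i ^ s i
      = C (∏ i : Fin m, y i ^ s (Fin.castLE hmn i)) := by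
    rw [map_prod]
    refine (Finset.prod_bij (fun (i : Fin m) _ => Fin.castLE hmn i) ?_ ?_ ?_ ?_).symm
    · intro i _
      simp [Fin.castLE, i.isLt]
    · intro i _ j _ h
      have h' : Fin.castLE hmn i = Fin.castLE hmn j := h
      simpa [Fin.ext_iff] using h'
    · intro j hj
      have hjm : (j : ℕ) < m := (Finset.mem_filter.mp hj).2
      exact ⟨⟨j, hjm⟩, Finset.mem_univ _, rfl⟩
    · intro i _
      have h : ((Fin.castLE hmn i : Fin n) : ℕ) < m := i.isLt
      rw [hf]
      simp only [h, dif_pos]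
      rw [map_pow]
      congr 1
  have h2 : ∏ i ∈ Finset.univ.filter (fun i : Fin n => ¬ (i : ℕ) < m), f i ^ s i
      = monomial (Finsupp.filter (fun i : Fin n => ¬ (i : ℕ) < m) s) (1 : L) := by
    set t := Finsupp.filter (fun i : Fin n => ¬ (i : ℕ) < m) s with ht
    have : ∏ i ∈ Finset.univ.filter (fun i : Fin n => ¬ (i : ℕ) < m), f i ^ s i
        = ∏ i : Fin n, X i ^ t i := by
      rw [← Finset.prod_filter_mul_prod_filter_not Finset.univ (fun i : Fin n => (i : ℕ) < m)
        (fun i => X i ^ t i)]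
      have hz : ∏ i ∈ Finset.univ.filter (fun i : Fin n => (i : ℕ) < m), (X i : MvPolynomial (Fin n) L) ^ t i = 1 := by
        refine Finset.prod_eq_one fun i hi => ?_
        rw [ht]
        simp [Finsupp.filter_apply, (Finset.mem_filter.mp hi).2]
      rw [hz, one_mul]
      refine Finset.prod_congr rfl fun i hi => ?_
      rw [hf]
      simp only [(Finset.mem_filter.mp hi).2, dif_neg, not_false_iff]
      rw [ht]
      have him := (Finset.mem_filter.mp hi).2
      simp [Finsupp.filter_apply, him, not_lt.mp him]
    rw [this]
    rw [← MvPolynomial.prod_X_pow_eq_monomial]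
    refine (Finset.prod_subset (Finset.subset_univ _) fun i _ hi => ?_).symm
    rw [Finsupp.notMem_support_iff.mp hi, pow_zero]
  rw [h1, h2, algebraMap_eq, ← mul_assoc, ← map_mul, C_mul_monomial, mul_one]

lemma coeff_partialEval {L : Type*} [CommSemiring L] {n m : ℕ} (hmn : m ≤ n)
    (y : Fin m → L) (P : MvPolynomial (Fin n) L) (t : Fin n →₀ ℕ) :
    MvPolynomial.coeff t (partialEval y P) = ∑ s ∈ P.support,
      if Finsupp.filter (fun i : Fin n => ¬ (i : ℕ) < m) s = t
      then MvPolynomial.coeff s P * ∏ i : Fin m, y i ^ s (Fin.castLE hmn i) else 0 := by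
  classical
  rw [partialEval_eq_sum hmn, ← MvPolynomial.lcoeff_apply, map_sum]
  exact Finset.sum_congr rfl fun s _ => by rw [MvPolynomial.lcoeff_apply, coeff_monomial]

section locSup

variable {L V : Type*} [Field L] (absv : V → AbsoluteValue L ℝ)

/-- Local sup of coefficient absolute values of a polynomial. -/
noncomputable def Tloc {σ : Type*} (P : MvPolynomial σ L) (v : V) : ℝ :=
  max 1 (⨆ s ∈ P.support, absv v (MvPolynomial.coeff s P))

/-- Local sup of absolute values of a block of the tuple `y`. -/
noncomputable def Mloc {m r : ℕ} (π : Fin m → Fin r) (y : Fin m → L) (k : Fin r) (v : V) : ℝ :=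
  max 1 (⨆ i : {i : Fin m // π i = k}, absv v (y i))

variable {σ : Type*} {P : MvPolynomial σ L} {v : V}

lemma one_le_Tloc : 1 ≤ Tloc absv P v := le_max_left _ _

lemma le_Tloc {s : σ →₀ ℕ} (hs : s ∈ P.support) :
    absv v (MvPolynomial.coeff s P) ≤ Tloc absv P v :=
  le_trans (le_supMem (g := fun s => absv v (MvPolynomial.coeff s P)) hs) (le_max_right _ _)

lemma Tloc_le {R : ℝ} (hR : 1 ≤ R)
    (h : ∀ s ∈ P.support, absv v (MvPolynomial.coeff s P) ≤ R) : Tloc absv P v ≤ R :=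
  max_le hR (supMem_le (le_trans zero_le_one hR) h)

lemma Tloc_eq_one (h : ∀ s ∈ P.support, absv v (MvPolynomial.coeff s P) ≤ 1) :
    Tloc absv P v = 1 :=
  max_eq_left (supMem_le zero_le_one h)

variable {m r : ℕ} {π : Fin m → Fin r} {y : Fin m → L}

lemma one_le_Mloc {k : Fin r} : 1 ≤ Mloc absv π y k v := le_max_left _ _

lemma le_Mloc (i : Fin m) : absv v (y i) ≤ Mloc absv π y (π i) v :=
  le_trans (le_ciSup (f := fun j : {j : Fin m // π j = π i} => absv v (y j))
    (Set.Finite.bddAbove (Set.finite_range _)) ⟨i, rfl⟩) (le_max_right _ _)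

lemma Mloc_eq_one {k : Fin r} (h : ∀ i : Fin m, π i = k → absv v (y i) ≤ 1) :
    Mloc absv π y k v = 1 :=
  max_eq_left (Real.iSup_le (fun i => h i i.2) zero_le_one)

end locSup

/-- Refined height bound for partial evaluation: if `{1,…,m}` is partitioned
into parts `I_1, …, I_r` (encoded by `π : Fin m → Fin r`) and `d_k` bounds the
total degree of `P` in the variables of `I_k`, then
`h(Q) ≤ h(P) + Σ_k #I_k·log(d_k+1) + Σ_k d_k·h((y_i)_{i ∈ I_k})`. -/
theorem height_partialEval_le_partition
    {L V : Type*} [Field L]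
    (absv : V → AbsoluteValue L ℝ) (wt : V → ℝ) (arch : Set V)
    (harch : arch.Finite) (hwt : ∀ v, 0 ≤ wt v)
    (hna : ∀ v ∉ arch, IsNonarchimedean ⇑(absv v))
    (hsum : ∑ᶠ v ∈ arch, wt v = 1)
    (hfin : ∀ x : L, x ≠ 0 → {v | absv v x ≠ 1}.Finite)
    {n : ℕ} (P : MvPolynomial (Fin n) L) (d : ℕ) (hd : P.totalDegree ≤ d)
    (m : ℕ) (hmn : m ≤ n) (y : Fin m → L)
    (r : ℕ) (π : Fin m → Fin r) (dk : Fin r → ℕ)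
    (hdk : ∀ s ∈ P.support, ∀ k : Fin r,
      (∑ i ∈ Finset.univ.filter fun i : Fin m => π i = k,
        s (Fin.castLE hmn i)) ≤ dk k) :
    heightMv absv wt (partialEval y P) ≤
      heightMv absv wt P
        + ∑ k : Fin r, ((Finset.univ.filter fun i : Fin m => π i = k).card : ℝ)
            * Real.log (dk k + 1)
        + ∑ k : Fin r, (dk k : ℝ)
            * heightTuple absv wt (fun i : {i : Fin m // π i = k} => y i) := by
  classical
  have hN1 : (1 : ℝ) ≤ ∏ k : Fin r,
      ((dk k : ℝ) + 1) ^ (Finset.univ.filter fun i : Fin m => π i = k).card :=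
 by
    calc (1:ℝ) = ∏ _k : Fin r, 1 := by simp
    _ ≤ _ := Finset.prod_le_prod (fun k _ => zero_le_one)
        (fun k _ => one_le_pow₀ (le_add_of_nonneg_left (Nat.cast_nonneg (dk k))))
  have hprod1 : ∀ v, (1:ℝ) ≤ ∏ k : Fin r, Mloc absv π y k v ^ dk k := by
    intro v
    calc (1:ℝ) = ∏ _k : Fin r, 1 := by simp
    _ ≤ _ := Finset.prod_le_prod (fun k _ => zero_le_one)
        (fun k _ => one_le_pow₀ (one_le_Mloc absv))
  -- cardinality of fibers of truncation
  have hcard : ∀ t : Fin n →₀ ℕ,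
      ((P.support.filter fun s => Finsupp.filter (fun i : Fin n => ¬ (i : ℕ) < m) s = t).card : ℝ)
        ≤ ∏ k : Fin r,
          ((dk k : ℝ) + 1) ^ (Finset.univ.filter fun i : Fin m => π i = k).card := by
    intro t
    have hb : ∀ s ∈ P.support, ∀ i : Fin m, s (Fin.castLE hmn i) < dk (π i) + 1 := by
      intro s hs i
      have hsingle : s (Fin.castLE hmn i)
          ≤ ∑ j ∈ Finset.univ.filter (fun j : Fin m => π j = π i), s (Fin.castLE hmn j) :=
        Finset.single_le_sum (s := Finset.univ.filter (fun j : Fin m => π j = π i))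
          (f := fun j : Fin m => s (Fin.castLE hmn j)) (fun _ _ => Nat.zero_le _)
          (Finset.mem_filter.mpr ⟨Finset.mem_univ i, rfl⟩)
      exact Nat.lt_succ_of_le (le_trans hsingle (hdk s hs (π i)))
    have key : (P.support.filter fun s =>
        Finsupp.filter (fun i : Fin n => ¬ (i : ℕ) < m) s = t).card
        ≤ Fintype.card (∀ i : Fin m, Fin (dk (π i) + 1)) := by
      rw [← Finset.card_univ]
      apply Finset.card_le_card_of_injOn
        (fun s => fun i : Fin m => if h : s (Fin.castLE hmn i) < dk (π i) + 1
          then (⟨s (Fin.castLE hmn i), h⟩ : Fin (dk (π i) + 1)) else ⟨0, Nat.succ_pos _⟩)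
      · intro s _; exact Finset.mem_univ _
      · intro s1 hs1 s2 hs2 heq
        obtain ⟨hs1p, hs1t⟩ := Finset.mem_filter.mp (Finset.mem_coe.mp hs1)
        obtain ⟨hs2p, hs2t⟩ := Finset.mem_filter.mp (Finset.mem_coe.mp hs2)
        ext i
        by_cases him : (i : ℕ) < m
        · have h0 := congrFun heq ⟨i, him⟩
          simp only [dif_pos (hb s1 hs1p ⟨i, him⟩), dif_pos (hb s2 hs2p ⟨i, him⟩)] at h0
          have h1 := congrArg Fin.val h0
          simpa [Fin.castLE] using h1
        · have e1 : s1 i = t i := by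
            rw [← hs1t]; simp [Finsupp.filter_apply, him, not_lt.mp him]
          have e2 : s2 i = t i := by
            rw [← hs2t]; simp [Finsupp.filter_apply, him, not_lt.mp him]
          rw [e1, e2]
    calc ((P.support.filter fun s =>
            Finsupp.filter (fun i : Fin n => ¬ (i : ℕ) < m) s = t).card : ℝ)
        ≤ (Fintype.card (∀ i : Fin m, Fin (dk (π i) + 1)) : ℝ) := Nat.cast_le.mpr key
      _ = ∏ i : Fin m, ((dk (π i) : ℝ) + 1) := by
          rw [Fintype.card_pi]
          push_cast [Fintype.card_fin]
          rfl
      _ = _ := by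
          rw [← Finset.prod_fiberwise' Finset.univ π fun k => ((dk k : ℝ) + 1)]
          exact Finset.prod_congr rfl fun k _ => by rw [Finset.prod_const]
  -- term bound
  have hterm : ∀ v, ∀ s ∈ P.support,
      absv v (MvPolynomial.coeff s P * ∏ i : Fin m, y i ^ s (Fin.castLE hmn i))
        ≤ Tloc absv P v * ∏ k : Fin r, Mloc absv π y k v ^ dk k := by
    intro v s hs
    rw [map_mul, map_prod]
    have h2 : ∏ i : Fin m, absv v (y i ^ s (Fin.castLE hmn i))
        ≤ ∏ k : Fin r, Mloc absv π y k v ^ dk k := by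
      have step1 : ∏ i : Fin m, absv v (y i ^ s (Fin.castLE hmn i))
          ≤ ∏ i : Fin m, Mloc absv π y (π i) v ^ s (Fin.castLE hmn i) := by
        refine Finset.prod_le_prod (fun i _ => (absv v).nonneg _) fun i _ => ?_
        rw [AbsoluteValue.map_pow]
        exact pow_le_pow_left₀ ((absv v).nonneg _) (le_Mloc absv i) _
      refine le_trans step1 ?_
      rw [← Finset.prod_fiberwise Finset.univ π
        (fun i => Mloc absv π y (π i) v ^ s (Fin.castLE hmn i))]
      refine Finset.prod_le_prod
        (fun k _ => Finset.prod_nonneg fun i _ =>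
          pow_nonneg (le_trans zero_le_one (one_le_Mloc absv)) _) fun k _ => ?_
      have heq : ∏ i ∈ Finset.univ.filter (fun i : Fin m => π i = k),
          Mloc absv π y (π i) v ^ s (Fin.castLE hmn i)
          = Mloc absv π y k v ^ ∑ i ∈ Finset.univ.filter (fun i : Fin m => π i = k),
              s (Fin.castLE hmn i) := by
        rw [← Finset.prod_pow_eq_pow_sum]
        exact Finset.prod_congr rfl fun i hi => by
          rw [(Finset.mem_filter.mp hi).2]
      rw [heq]
      exact pow_le_pow_right₀ (one_le_Mloc absv) (hdk s hs k)
    exact mul_le_mul (le_Tloc absv hs) h2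
      (Finset.prod_nonneg fun i _ => (absv v).nonneg _)
      (le_trans zero_le_one (one_le_Tloc absv))
  -- coefficient bound
  have hc : ∀ v, ∀ t : Fin n →₀ ℕ,
      absv v (MvPolynomial.coeff t (partialEval y P))
        ≤ (if v ∈ arch then ∏ k : Fin r,
            ((dk k : ℝ) + 1) ^ (Finset.univ.filter fun i : Fin m => π i = k).card else 1)
          * (Tloc absv P v * ∏ k : Fin r, Mloc absv π y k v ^ dk k) := by
    intro v t
    have hB0 : (0:ℝ) ≤ Tloc absv P v * ∏ k : Fin r, Mloc absv π y k v ^ dk k := by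
      have h1 := one_le_Tloc (absv := absv) (P := P) (v := v)
      have h2 := hprod1 v
      nlinarith
    rw [coeff_partialEval hmn]
    by_cases hv : v ∈ arch
    · rw [if_pos hv]
      calc absv v (∑ s ∈ P.support,
            if Finsupp.filter (fun i : Fin n => ¬ (i : ℕ) < m) s = t
            then MvPolynomial.coeff s P * ∏ i : Fin m, y i ^ s (Fin.castLE hmn i) else 0)
          ≤ ∑ s ∈ P.support, absv v
            (if Finsupp.filter (fun i : Fin n => ¬ (i : ℕ) < m) s = t
            then MvPolynomial.coeff s P * ∏ i : Fin m, y i ^ s (Fin.castLE hmn i) else 0) :=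
            (absv v).sum_le _ _
        _ = ∑ s ∈ P.support.filter
              (fun s => Finsupp.filter (fun i : Fin n => ¬ (i : ℕ) < m) s = t),
              absv v (MvPolynomial.coeff s P * ∏ i : Fin m, y i ^ s (Fin.castLE hmn i)) := by
            rw [Finset.sum_filter]
            exact Finset.sum_congr rfl fun s _ => by
              split_ifs with h
              · rfl
              · exact map_zero _
        _ ≤ (P.support.filter
              (fun s => Finsupp.filter (fun i : Fin n => ¬ (i : ℕ) < m) s = t)).card
              • (Tloc absv P v * ∏ k : Fin r, Mloc absv π y k v ^ dk k) := by
            refine Finset.sum_le_card_nsmul _ _ _ fun s hs => ?_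
            exact hterm v s (Finset.mem_filter.mp hs).1
        _ ≤ _ := by
            rw [nsmul_eq_mul]
            exact mul_le_mul_of_nonneg_right (hcard t) hB0
    · rw [if_neg hv, one_mul]
      refine nonarch_sum (hna v hv) _ _ hB0 fun s hs => ?_
      split_ifs with h
      · exact hterm v s hs
      · rw [map_zero]; exact hB0
  -- logarithmic local bound
  have hlog : ∀ v, Real.log (Tloc absv (partialEval y P) v) ≤ Real.log (Tloc absv P v)
      + (if v ∈ arch then Real.log (∏ k : Fin r,
          ((dk k : ℝ) + 1) ^ (Finset.univ.filter fun i : Fin m => π i = k).card) else 0)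
      + ∑ k : Fin r, (dk k : ℝ) * Real.log (Mloc absv π y k v) := by
    intro v
    have hite1 : (1:ℝ) ≤ (if v ∈ arch then ∏ k : Fin r,
        ((dk k : ℝ) + 1) ^ (Finset.univ.filter fun i : Fin m => π i = k).card else 1) := by
      split_ifs; exacts [hN1, le_refl 1]
    have hT1 := one_le_Tloc (absv := absv) (P := P) (v := v)
    have hp1 := hprod1 v
    have hR1 : (1:ℝ) ≤ (if v ∈ arch then ∏ k : Fin r,
        ((dk k : ℝ) + 1) ^ (Finset.univ.filter fun i : Fin m => π i = k).card else 1)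
        * (Tloc absv P v * ∏ k : Fin r, Mloc absv π y k v ^ dk k) := by
      have hTp : (1:ℝ) ≤ Tloc absv P v * ∏ k : Fin r, Mloc absv π y k v ^ dk k := by
        nlinarith
      nlinarith
    have hUle : Tloc absv (partialEval y P) v ≤ (if v ∈ arch then ∏ k : Fin r,
        ((dk k : ℝ) + 1) ^ (Finset.univ.filter fun i : Fin m => π i = k).card else 1)
        * (Tloc absv P v * ∏ k : Fin r, Mloc absv π y k v ^ dk k) :=
      Tloc_le absv hR1 fun t _ => hc v t
    calc Real.log (Tloc absv (partialEval y P) v)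
        ≤ Real.log ((if v ∈ arch then ∏ k : Fin r,
            ((dk k : ℝ) + 1) ^ (Finset.univ.filter fun i : Fin m => π i = k).card else 1)
            * (Tloc absv P v * ∏ k : Fin r, Mloc absv π y k v ^ dk k)) :=
          Real.log_le_log (lt_of_lt_of_le zero_lt_one (one_le_Tloc absv)) hUle
      _ = _ := by
          rw [Real.log_mul (by nlinarith) (by nlinarith),
            Real.log_mul (by nlinarith) (by nlinarith)]
          have hiteq : Real.log (if v ∈ arch then ∏ k : Fin r,
              ((dk k : ℝ) + 1) ^ (Finset.univ.filter fun i : Fin m => π i = k).card else 1)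
              = (if v ∈ arch then Real.log (∏ k : Fin r,
                ((dk k : ℝ) + 1) ^ (Finset.univ.filter fun i : Fin m => π i = k).card) else 0) := by
            split_ifs <;> simp
          rw [hiteq, Real.log_prod (f := fun k => Mloc absv π y k v ^ dk k)
            (fun k _ => ne_of_gt (pow_pos (lt_of_lt_of_le zero_lt_one (one_le_Mloc absv)) _))]
          have hpw : ∀ k : Fin r, Real.log (Mloc absv π y k v ^ dk k)
              = (dk k : ℝ) * Real.log (Mloc absv π y k v) := fun k => by rw [Real.log_pow]
          rw [Finset.sum_congr rfl fun k _ => hpw k]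
          ring
  -- the finite set of relevant places
  have hbadPfin : (⋃ s ∈ (P.support : Set (Fin n →₀ ℕ)),
      {v | absv v (MvPolynomial.coeff s P) ≠ 1}).Finite :=
    Set.Finite.biUnion P.support.finite_toSet
      (fun s hs => hfin _ (MvPolynomial.mem_support_iff.mp hs))
  have hbadQfin : (⋃ t ∈ ((partialEval y P).support : Set (Fin n →₀ ℕ)),
      {v | absv v (MvPolynomial.coeff t (partialEval y P)) ≠ 1}).Finite :=
    Set.Finite.biUnion (partialEval y P).support.finite_toSet
      (fun t ht => hfin _ (MvPolynomial.mem_support_iff.mp ht))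
  have hbadyfin : ∀ k : Fin r, (⋃ i ∈ {i : Fin m | π i = k ∧ y i ≠ 0},
      {v | absv v (y i) ≠ 1}).Finite := fun k =>
    Set.Finite.biUnion (Set.toFinite _) (fun i hi => hfin _ hi.2)
  have hbig : (arch ∪ (⋃ s ∈ (P.support : Set (Fin n →₀ ℕ)),
      {v | absv v (MvPolynomial.coeff s P) ≠ 1})
      ∪ (⋃ t ∈ ((partialEval y P).support : Set (Fin n →₀ ℕ)),
        {v | absv v (MvPolynomial.coeff t (partialEval y P)) ≠ 1})
      ∪ ⋃ k : Fin r, ⋃ i ∈ {i : Fin m | π i = k ∧ y i ≠ 0},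
        {v | absv v (y i) ≠ 1}).Finite :=
    ((harch.union hbadPfin).union hbadQfin).union (Set.finite_iUnion hbadyfin)
  set S : Finset V := hbig.toFinset with hS
  have hSmem : ∀ v : V, v ∈ S ↔ v ∈ arch ∨ (v ∈ ⋃ s ∈ (P.support : Set (Fin n →₀ ℕ)),
      {v | absv v (MvPolynomial.coeff s P) ≠ 1})
      ∨ (v ∈ ⋃ t ∈ ((partialEval y P).support : Set (Fin n →₀ ℕ)),
        {v | absv v (MvPolynomial.coeff t (partialEval y P)) ≠ 1})
      ∨ (v ∈ ⋃ k : Fin r, ⋃ i ∈ {i : Fin m | π i = k ∧ y i ≠ 0},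
        {v | absv v (y i) ≠ 1}) := by
    intro v
    rw [hS, Set.Finite.mem_toFinset]
    simp only [Set.mem_union]
    tauto
  -- vanishing outside bad sets
  have hTvan : ∀ v : V, v ∉ S → Real.log (Tloc absv P v) = 0 := by
    intro v hv
    rw [Tloc_eq_one absv fun s hs => ?_, Real.log_one]
    by_contra hlt
    exact hv ((hSmem v).mpr (Or.inr (Or.inl (Set.mem_biUnion (Finset.mem_coe.mpr hs)
      (fun h1 => hlt (le_of_eq h1))))))
  have hUvan : ∀ v : V, v ∉ S → Real.log (Tloc absv (partialEval y P) v) = 0 := by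
    intro v hv
    rw [Tloc_eq_one absv fun t ht => ?_, Real.log_one]
    by_contra hlt
    exact hv ((hSmem v).mpr (Or.inr (Or.inr (Or.inl (Set.mem_biUnion (Finset.mem_coe.mpr ht)
      (fun h1 => hlt (le_of_eq h1)))))))
  have hMvan : ∀ (k : Fin r) (v : V), v ∉ S → Real.log (Mloc absv π y k v) = 0 := by
    intro k v hv
    rw [Mloc_eq_one absv fun i hik => ?_, Real.log_one]
    rcases eq_or_ne (y i) 0 with h0 | h0
    · rw [h0, map_zero]; exact zero_le_one
    · by_contra hlt
      refine hv ((hSmem v).mpr (Or.inr (Or.inr (Or.inr (Set.mem_iUnion.mpr ⟨k,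
        Set.mem_biUnion (show i ∈ {i : Fin m | π i = k ∧ y i ≠ 0} from ⟨hik, h0⟩)
          (fun h1 => hlt (le_of_eq h1))⟩)))))
  -- finsum to finite sums
  have hhQ : heightMv absv wt (partialEval y P)
      = ∑ v ∈ S, wt v * Real.log (Tloc absv (partialEval y P) v) := by
    refine finsum_eq_finset_sum_of_support_subset _ fun v hv => ?_
    by_contra hvS
    have hvS' : v ∉ S := fun h => hvS (Finset.mem_coe.mpr h)
    exact hv (show wt v * Real.log (Tloc absv (partialEval y P) v) = 0 by
      rw [hUvan v hvS', mul_zero])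
  have hhP : heightMv absv wt P = ∑ v ∈ S, wt v * Real.log (Tloc absv P v) := by
    refine finsum_eq_finset_sum_of_support_subset _ fun v hv => ?_
    by_contra hvS
    have hvS' : v ∉ S := fun h => hvS (Finset.mem_coe.mpr h)
    exact hv (show wt v * Real.log (Tloc absv P v) = 0 by rw [hTvan v hvS', mul_zero])
  have hhy : ∀ k : Fin r, heightTuple absv wt (fun i : {i : Fin m // π i = k} => y i)
      = ∑ v ∈ S, wt v * Real.log (Mloc absv π y k v) := by
    intro k
    refine finsum_eq_finset_sum_of_support_subset _ fun v hv => ?_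
    by_contra hvS
    have hvS' : v ∉ S := fun h => hvS (Finset.mem_coe.mpr h)
    exact hv (show wt v * Real.log (Mloc absv π y k v) = 0 by rw [hMvan k v hvS', mul_zero])
  -- the constant (archimedean) term
  have hwtsum : ∑ v ∈ harch.toFinset, wt v = 1 := by
    rw [← finsum_mem_coe_finset, harch.coe_toFinset]
    exact hsum
  have hconst : ∑ v ∈ S, (if v ∈ arch then wt v * Real.log (∏ k : Fin r,
      ((dk k : ℝ) + 1) ^ (Finset.univ.filter fun i : Fin m => π i = k).card) else 0)
      = Real.log (∏ k : Fin r,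
        ((dk k : ℝ) + 1) ^ (Finset.univ.filter fun i : Fin m => π i = k).card) := by
    rw [← Finset.sum_filter]
    have hfS : S.filter (· ∈ arch) = harch.toFinset := by
      ext v
      simp only [Finset.mem_filter, Set.Finite.mem_toFinset]
      constructor
      · exact fun h => h.2
      · intro h
        exact ⟨(hSmem v).mpr (Or.inl h), h⟩
    rw [hfS, ← Finset.sum_mul, hwtsum, one_mul]
  have hlogN : Real.log (∏ k : Fin r,
      ((dk k : ℝ) + 1) ^ (Finset.univ.filter fun i : Fin m => π i = k).card)
      = ∑ k : Fin r, ((Finset.univ.filter fun i : Fin m => π i = k).card : ℝ)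
        * Real.log ((dk k : ℝ) + 1) := by
    rw [Real.log_prod (fun k _ => by positivity)]
    exact Finset.sum_congr rfl fun k _ => by rw [Real.log_pow]
  -- assemble
  rw [hhQ, hhP]
  have hstep : ∑ v ∈ S, wt v * Real.log (Tloc absv (partialEval y P) v)
      ≤ ∑ v ∈ S, (wt v * Real.log (Tloc absv P v)
        + (if v ∈ arch then wt v * Real.log (∏ k : Fin r,
          ((dk k : ℝ) + 1) ^ (Finset.univ.filter fun i : Fin m => π i = k).card) else 0)
        + wt v * ∑ k : Fin r, (dk k : ℝ) * Real.log (Mloc absv π y k v)) := by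
    refine Finset.sum_le_sum fun v _ => ?_
    have h1 := mul_le_mul_of_nonneg_left (hlog v) (hwt v)
    calc wt v * Real.log (Tloc absv (partialEval y P) v)
        ≤ wt v * (Real.log (Tloc absv P v)
          + (if v ∈ arch then Real.log (∏ k : Fin r,
            ((dk k : ℝ) + 1) ^ (Finset.univ.filter fun i : Fin m => π i = k).card) else 0)
          + ∑ k : Fin r, (dk k : ℝ) * Real.log (Mloc absv π y k v)) := h1
      _ = _ := by split_ifs <;> ring
  refine le_trans hstep ?_
  rw [Finset.sum_add_distrib, Finset.sum_add_distrib, hconst]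
  have hswap : ∑ v ∈ S, wt v * ∑ k : Fin r, (dk k : ℝ) * Real.log (Mloc absv π y k v)
      = ∑ k : Fin r, (dk k : ℝ)
          * heightTuple absv wt (fun i : {i : Fin m // π i = k} => y i) := by
    have : ∀ v ∈ S, wt v * ∑ k : Fin r, (dk k : ℝ) * Real.log (Mloc absv π y k v)
        = ∑ k : Fin r, (dk k : ℝ) * (wt v * Real.log (Mloc absv π y k v)) := by
      intro v _
      rw [Finset.mul_sum]
      exact Finset.sum_congr rfl fun k _ => by ring
    rw [Finset.sum_congr rfl this, Finset.sum_comm]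
    refine Finset.sum_congr rfl fun k _ => ?_
    rw [hhy k, Finset.mul_sum]
  rw [hswap, hlogN]
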